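/- Let 0 < p < 1/2 and q = 1 − p. Let R_k(z) be the polynomials defined by R_{−1}(z) = 1, R_0(z) = 1 − q z, and R_k(z) = R_{k−1}(z) − p q z² R_{k−2}(z) for k ≥ 1. For all sufficiently large k, R_k has a zero z_k that is real, positive, greater than 1, and of smallest modulus among all complex zeros of R_k, and lim_{k→∞} (z_k − 1)·(q/p)^k = p (1 − 2p)² / q². -/

import Mathlib

open Filter Metric Set

/-- Index-shifted denominator polynomials of the weak scenario, evaluated at a
complex argument: `RwrecC p z (k+1)` is `R_k(z)`, with `R_{-1}(z) = 1`,
`R_0(z) = 1 - (1-p) z`, and `R_k(z) = R_{k-1}(z) - p (1-p) z² R_{k-2}(z)` for `k ≥ 1`. -/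
noncomputable def RwrecC (p : ℝ) (z : ℂ) : ℕ → ℂ
  | 0 => 1
  | 1 => 1 - (1 - (p : ℂ)) * z
  | (k + 2) => RwrecC p z (k + 1) - (p : ℂ) * (1 - (p : ℂ)) * z ^ 2 * RwrecC p z k

noncomputable def RwrecR (p : ℝ) (x : ℝ) : ℕ → ℝ
  | 0 => 1
  | 1 => 1 - (1 - p) * x
  | (k + 2) => RwrecR p x (k + 1) - p * (1 - p) * x ^ 2 * RwrecR p x k

lemma geo_aux (C θ : ℝ) (h0 : 0 ≤ θ) (h1 : θ < 1) :
    Tendsto (fun n : ℕ => (n+1 : ℝ) * (C * θ^(n+1))) atTop (nhds 0) := by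
  have hs : Summable (fun n : ℕ => (n:ℝ)^1 * θ^n) :=
    summable_pow_mul_geometric_of_norm_lt_one 1 (by rwa [Real.norm_eq_abs, abs_of_nonneg h0])
  have ht : Tendsto (fun n : ℕ => (n:ℝ)^1 * θ^n) atTop (nhds 0) := hs.tendsto_atTop_zero
  have ht2 := ht.comp (tendsto_add_atTop_nat 1)
  have : Tendsto (fun n : ℕ => C * (((n+1:ℕ):ℝ)^1 * θ^(n+1))) atTop (nhds (C * 0)) :=
    ht2.const_mul C
  rw [mul_zero] at this
  convert this using 2 with n
  push_cast
  ring

lemma evlt (f : ℕ → ℝ) (c : ℝ) (hc : 0 < c) (h : Tendsto f atTop (nhds 0)) :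
    ∀ᶠ n in atTop, f n < c := by
  have := h.eventually (eventually_lt_nhds hc)
  simpa using this

/-- compatibility: the complex absolute value as a bundled absolute value -/
noncomputable def Complex.abs : AbsoluteValue ℂ ℝ :=
  IsAbsoluteValue.toAbsoluteValue (norm : ℂ → ℝ)

lemma Complex.norm_eq_abs (z : ℂ) : ‖z‖ = Complex.abs z := rfl

lemma Complex.abs_ofReal (x : ℝ) : Complex.abs (x : ℂ) = |x| := Complex.norm_real x

lemma Complex.continuous_abs : Continuous Complex.abs := continuous_norm

lemma Complex.abs_two : Complex.abs 2 = 2 := by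
  rw [← Complex.norm_eq_abs]; norm_num

lemma Complex.normSq_eq_abs (z : ℂ) : Complex.normSq z = Complex.abs z ^ 2 :=
  Complex.normSq_eq_norm_sq z

lemma Complex.re_le_abs (z : ℂ) : z.re ≤ Complex.abs z := Complex.re_le_norm z

lemma Complex.dist_eq_abs (z w : ℂ) : dist z w = Complex.abs (z - w) := Complex.dist_eq z w

lemma pow_tendsto_one (u : ℕ → ℂ) 
    (h : Tendsto (fun n : ℕ => (n+1 : ℝ) * Complex.abs (u n - 1)) atTop (nhds 0)) :
    Tendsto (fun n : ℕ => u n ^ (n+1)) atTop (nhds 1) := by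
  rw [tendsto_iff_norm_sub_tendsto_zero]
  have hbound : ∀ n : ℕ, ‖u n ^ (n+1) - 1‖ ≤
      ((n+1 : ℝ) * Complex.abs (u n - 1)) * Real.exp ((n+1 : ℝ) * Complex.abs (u n - 1)) := by
    intro n
    set d : ℝ := Complex.abs (u n - 1) with hd
    have hd0 : 0 ≤ d := Complex.abs.nonneg _
    have h1 : ‖u n‖ ≤ 1 + d := by
      calc ‖u n‖ = ‖(u n - 1) + 1‖ := by ring_nf
      _ ≤ ‖u n - 1‖ + ‖(1:ℂ)‖ := norm_add_le _ _
      _ = d + 1 := by rw [Complex.norm_eq_abs, ← hd]; simp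
      _ = 1 + d := by ring
    have hgs : u n ^ (n+1) - 1 = (∑ i ∈ Finset.range (n+1), u n ^ i) * (u n - 1) :=
      (geom_sum_mul _ _).symm
    have hsum : ‖∑ i ∈ Finset.range (n+1), u n ^ i‖ ≤ (n+1 : ℝ) * (1+d)^(n+1) := by
      calc ‖∑ i ∈ Finset.range (n+1), u n ^ i‖ ≤ ∑ i ∈ Finset.range (n+1), ‖u n ^ i‖ :=
        norm_sum_le _ _
      _ ≤ ∑ i ∈ Finset.range (n+1), (1+d)^(n+1) := by
          apply Finset.sum_le_sum
          intro i hi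
          rw [norm_pow]
          calc ‖u n‖^i ≤ (1+d)^i := pow_le_pow_left₀ (Complex.abs.nonneg _) h1 i
          _ ≤ (1+d)^(n+1) := pow_le_pow_right₀ (by linarith) (Finset.mem_range.1 hi).le
      _ = (n+1 : ℝ) * (1+d)^(n+1) := by
          rw [Finset.sum_const, Finset.card_range]; push_cast; ring
    have hexp : (1+d)^(n+1) ≤ Real.exp ((n+1 : ℝ) * d) := by
      calc (1+d)^(n+1) ≤ (Real.exp d)^(n+1) := by
            apply pow_le_pow_left₀ (by linarith)
            linarith [Real.add_one_le_exp d]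
      _ = Real.exp ((n+1 : ℝ) * d) := by
          rw [← Real.exp_nat_mul]; norm_num
    calc ‖u n ^ (n+1) - 1‖ = ‖∑ i ∈ Finset.range (n+1), u n ^ i‖ * ‖u n - 1‖ := by
          rw [hgs, norm_mul]
    _ ≤ ((n+1 : ℝ) * (1+d)^(n+1)) * d := by
        apply mul_le_mul hsum le_rfl (Complex.abs.nonneg _)
        positivity
    _ ≤ ((n+1 : ℝ) * d) * Real.exp ((n+1:ℝ) * d) := by
        have hn1 : (0:ℝ) ≤ (n+1:ℝ) := by positivity
        nlinarith [Real.exp_pos ((n+1:ℝ)*d), hexp, mul_le_mul_of_nonneg_left hexp hn1]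
  apply squeeze_zero (fun n => Complex.abs.nonneg _) hbound
  have hexp0 : Tendsto (fun n : ℕ => Real.exp ((n+1:ℝ) * Complex.abs (u n - 1))) atTop
      (nhds (Real.exp 0)) := (Real.continuous_exp.tendsto 0).comp h
  have := h.mul hexp0
  simpa using this

noncomputable section
namespace WDZ

variable (p : ℝ)

/-- the quantity under the square root -/
def Xf (w : ℂ) : ℂ := 1 - ((4*(p*(1-p)) : ℝ) : ℂ) * w^2
/-- principal square root of `Xf` -/
def sf (w : ℂ) : ℂ := Xf p w ^ ((1:ℂ)/2)
def lp (w : ℂ) : ℂ := (1 + sf p w)/2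
def lm (w : ℂ) : ℂ := (1 - sf p w)/2
def Af (w : ℂ) : ℂ := (1 - (1-(p:ℂ))*w - lm p w)/ sf p w
def Bf (w : ℂ) : ℂ := (lp p w - (1 - (1-(p:ℂ))*w))/ sf p w
def Atil (w : ℂ) : ℂ := (-2*(1-(p:ℂ))*w) / (sf p w * (sf p w - 1 + 2*(1-(p:ℂ))*w))
def rf (w : ℂ) : ℂ := lm p w / lp p w
def rho : ℝ := 1/(2*Real.sqrt (p*(1-p)))
def sR (x : ℝ) : ℝ := Real.sqrt (1 - 4*(p*(1-p))*x^2)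
def lpR (x : ℝ) : ℝ := (1 + sR p x)/2
def lmR (x : ℝ) : ℝ := (1 - sR p x)/2
def AfR (x : ℝ) : ℝ := (1 - (1-p)*x - lmR p x)/ sR p x
def BfR (x : ℝ) : ℝ := (lpR p x - (1 - (1-p)*x))/ sR p x
def rR (x : ℝ) : ℝ := lmR p x / lpR p x
def del1 : ℝ := min (1/2) ((rho p - 1)/2)
def del : ℝ := del1 p / 8
def del2 : ℝ := del1 p / 2
def rho' : ℝ := (1 + rho p)/2
def x0 : ℝ := 1 + del p / 2

variable {p} (hp0 : 0 < p) (hp : p < 1/2)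

section Region
include hp0 hp

lemma hq0 : 0 < 1 - p := by linarith
lemma hcpos : 0 < p * (1-p) := mul_pos hp0 (by linarith)
lemma hc4 : 4 * (p * (1-p)) < 1 := by nlinarith
lemma rho_pos : 0 < rho p := by
  have := hcpos hp0 hp
  have : 0 < Real.sqrt (p*(1-p)) := Real.sqrt_pos.2 this
  unfold rho; positivity
lemma rho_sq : 4 * (p*(1-p)) * (rho p)^2 = 1 := by
  have h := hcpos hp0 hp
  have hs : Real.sqrt (p*(1-p)) ^ 2 = p*(1-p) := Real.sq_sqrt h.le
  have hs0 : Real.sqrt (p*(1-p)) ≠ 0 := by positivity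
  have h2 : (rho p)^2 = 1/(4*(p*(1-p))) := by
    unfold rho; rw [div_pow, mul_pow, Real.sq_sqrt h.le]; norm_num
  rw [h2]; field_simp; exact div_self (by linarith)
lemma rho_gt_one : 1 < rho p := by
  have h1 := rho_pos hp0 hp
  have h2 := rho_sq hp0 hp
  have h3 := hc4 hp0 hp
  have hc := hcpos hp0 hp
  by_contra h; push_neg at h
  have h4 : (rho p)^2 ≤ 1 := by nlinarith
  nlinarith

lemma Xre_pos {w : ℂ} (hw : w ∈ ball (0:ℂ) (rho p)) : 0 < (Xf p w).re := by
  have habs : Complex.abs w < rho p := (by simpa using mem_ball_iff_norm.mp hw : ‖w‖ < rho p)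
  have hre : (w^2).re ≤ Complex.abs w ^ 2 := by
    calc (w^2).re ≤ Complex.abs (w^2) := Complex.re_le_abs _
    _ = Complex.abs w ^ 2 := by simp [map_pow]
  have hX : (Xf p w).re = 1 - 4*(p*(1-p)) * (w^2).re := by
    simp [Xf, Complex.sub_re, Complex.mul_re]
  rw [hX]
  have hc := hcpos hp0 hp
  have h2 := rho_sq hp0 hp
  have hwpos : (0:ℝ) ≤ Complex.abs w := (Complex.abs.nonneg _)
  nlinarith [sq_nonneg (Complex.abs w)]

lemma Xf_ne {w : ℂ} (hw : w ∈ ball (0:ℂ) (rho p)) : Xf p w ≠ 0 := by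
  intro h; have := Xre_pos hp0 hp hw; rw [h] at this; simp at this

lemma sf_sq {w : ℂ} (hw : w ∈ ball (0:ℂ) (rho p)) : sf p w * sf p w = Xf p w := by
  have hne := Xf_ne hp0 hp hw
  rw [sf, ← Complex.cpow_add _ _ hne]
  norm_num

lemma sf_re_pos {w : ℂ} (hw : w ∈ ball (0:ℂ) (rho p)) : 0 < (sf p w).re := by
  have hne := Xf_ne hp0 hp hw
  have hXre := Xre_pos hp0 hp hw
  rw [sf, Complex.cpow_def_of_ne_zero hne]
  rw [Complex.exp_re]
  have harg : |(Complex.log (Xf p w) * ((1:ℂ)/2)).im| < Real.pi / 2 := by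
    have : (Complex.log (Xf p w) * ((1:ℂ)/2)).im = (Xf p w).arg / 2 := by
      simp [Complex.mul_im, Complex.log_im, Complex.log_re]
      ring
    rw [this, abs_div]
    have : |(Xf p w).arg| < Real.pi/2 := Complex.abs_arg_lt_pi_div_two_iff.2 (Or.inl hXre)
    rw [abs_of_pos (by norm_num : (0:ℝ) < 2)]
    have hpi := Real.pi_pos
    calc |(Xf p w).arg| / 2 < (Real.pi/2)/2 := by linarith
    _ ≤ Real.pi / 2 := by linarith
  have hcos : 0 < Real.cos ((Complex.log (Xf p w) * ((1:ℂ)/2)).im) := by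
    apply Real.cos_pos_of_mem_Ioo
    constructor <;> [linarith [abs_lt.mp harg]; linarith [abs_lt.mp harg]]
  positivity

lemma sf_ne {w : ℂ} (hw : w ∈ ball (0:ℂ) (rho p)) : sf p w ≠ 0 := by
  intro h; have := sf_re_pos hp0 hp hw; rw [h] at this; simp at this

lemma lp_re_pos {w : ℂ} (hw : w ∈ ball (0:ℂ) (rho p)) : 0 < (lp p w).re := by
  have := sf_re_pos hp0 hp hw
  simp [lp, Complex.div_re, Complex.add_re, Complex.normSq]
  nlinarith

lemma lp_ne {w : ℂ} (hw : w ∈ ball (0:ℂ) (rho p)) : lp p w ≠ 0 := by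
  intro h; have := lp_re_pos hp0 hp hw; rw [h] at this; simp at this

lemma abs_lm_lt_lp {w : ℂ} (hw : w ∈ ball (0:ℂ) (rho p)) :
    Complex.abs (lm p w) < Complex.abs (lp p w) := by
  have hs := sf_re_pos hp0 hp hw
  have h1 : Complex.abs (1 - sf p w) < Complex.abs (1 + sf p w) := by
    rw [← Real.sqrt_sq (Complex.abs.nonneg (1 - sf p w)),
        ← Real.sqrt_sq (Complex.abs.nonneg (1 + sf p w))]
    apply Real.sqrt_lt_sqrt (sq_nonneg _)
    rw [← Complex.normSq_eq_abs, ← Complex.normSq_eq_abs]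
    simp [Complex.normSq_apply, Complex.add_re, Complex.sub_re, Complex.add_im, Complex.sub_im]
    nlinarith
  simp only [lm, lp, map_div₀, Complex.abs_two]
  exact (div_lt_div_iff_of_pos_right two_pos).mpr h1

lemma abs_rf_lt_one {w : ℂ} (hw : w ∈ ball (0:ℂ) (rho p)) :
    Complex.abs (rf p w) < 1 := by
  rw [rf, map_div₀, div_lt_one (by
    have := lp_ne hp0 hp hw
    exact (Complex.abs.pos this))]
  exact abs_lm_lt_lp hp0 hp hw

end Region

section ClosedForm
include hp0 hp

lemma sf_sq' {w : ℂ} (hw : w ∈ ball (0:ℂ) (rho p)) :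
    sf p w * sf p w = 1 - 4*(p:ℂ)*(1-(p:ℂ))*w^2 := by
  have h := sf_sq hp0 hp hw
  unfold Xf at h; push_cast at h; linear_combination h

lemma lp_sub_lm (w : ℂ) : lp p w - lm p w = sf p w := by unfold lp lm; ring

lemma lp_quad {w : ℂ} (hw : w ∈ ball (0:ℂ) (rho p)) :
    lp p w ^ 2 = lp p w - (p:ℂ)*(1-(p:ℂ))*w^2 := by
  have h := sf_sq' hp0 hp hw; unfold lp; linear_combination h/4

lemma lm_quad {w : ℂ} (hw : w ∈ ball (0:ℂ) (rho p)) :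
    lm p w ^ 2 = lm p w - (p:ℂ)*(1-(p:ℂ))*w^2 := by
  have h := sf_sq' hp0 hp hw; unfold lm; linear_combination h/4

lemma closed_form {w : ℂ} (hw : w ∈ ball (0:ℂ) (rho p)) (n : ℕ) :
    RwrecC p w n = Af p w * lp p w ^ n + Bf p w * lm p w ^ n := by
  have hsne := sf_ne hp0 hp hw
  have hlp := lp_quad hp0 hp hw
  have hlm := lm_quad hp0 hp hw
  induction n using Nat.twoStepInduction with
  | zero =>
    show (1:ℂ) = _
    simp only [pow_zero, mul_one]
    unfold Af Bf lp lm; field_simp; ring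
  | one =>
    show 1 - (1 - (p:ℂ)) * w = _
    simp only [pow_one]
    unfold Af Bf lp lm; field_simp; ring
  | more n ih1 ih2 =>
    show RwrecC p w (n+1) - (p:ℂ)*(1-(p:ℂ))*w^2 * RwrecC p w n = _
    rw [ih2, ih1]
    have e1 : lp p w ^ (n+2) = lp p w ^ n * (lp p w - (p:ℂ)*(1-(p:ℂ))*w^2) := by
      rw [← hlp]; ring
    have e2 : lm p w ^ (n+2) = lm p w ^ n * (lm p w - (p:ℂ)*(1-(p:ℂ))*w^2) := by
      rw [← hlm]; ring
    rw [e1, e2]; ring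

end ClosedForm

lemma RwrecC_ofReal (p : ℝ) (x : ℝ) (n : ℕ) : RwrecC p (x:ℂ) n = ((RwrecR p x n : ℝ) : ℂ) := by
  induction n using Nat.twoStepInduction with
  | zero => simp [RwrecC, RwrecR]
  | one => simp [RwrecC, RwrecR]
  | more n ih1 ih2 =>
    show RwrecC p (x:ℂ) (n+1) - _ * RwrecC p (x:ℂ) n = _
    rw [ih2, ih1]
    show _ = ((RwrecR p x (n+1) - p*(1-p)*x^2 * RwrecR p x n : ℝ) : ℂ)
    push_cast; ring

lemma RwrecR_cont (p : ℝ) (n : ℕ) : Continuous fun x => RwrecR p x n := by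
  induction n using Nat.twoStepInduction with
  | zero => simpa [RwrecR] using continuous_const
  | one =>
    show Continuous fun x => 1 - (1-p)*x
    fun_prop
  | more n ih1 ih2 =>
    show Continuous fun x => RwrecR p x (n+1) - p*(1-p)*x^2 * RwrecR p x n
    fun_prop

lemma RwrecR_one (p : ℝ) (n : ℕ) : RwrecR p 1 n = p^n := by
  induction n using Nat.twoStepInduction with
  | zero => simp [RwrecR]
  | one => show 1 - (1-p)*1 = p^1; ring
  | more n ih1 ih2 =>
    show RwrecR p 1 (n+1) - p*(1-p)*1^2 * RwrecR p 1 n = p^(n+2)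
    rw [ih2, ih1]; ring


section RealBridge
include hp0 hp

lemma sf_real {x : ℝ} (hx : 4*(p*(1-p))*x^2 < 1) :
    sf p (x:ℂ) = ((sR p x : ℝ) : ℂ) := by
  have h0 : (0:ℝ) ≤ 1 - 4*(p*(1-p))*x^2 := by linarith
  have hX : Xf p (x:ℂ) = ((1 - 4*(p*(1-p))*x^2 : ℝ) : ℂ) := by unfold Xf; push_cast; ring
  have he : ((1:ℂ)/2) = (((1:ℝ)/2 : ℝ) : ℂ) := by push_cast; ring
  rw [sf, hX, he, ← Complex.ofReal_cpow h0]
  unfold sR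
  rw [Real.sqrt_eq_rpow]

lemma mem_ball_of_real {x : ℝ} (hx : 4*(p*(1-p))*x^2 < 1) :
    (x:ℂ) ∈ ball (0:ℂ) (rho p) := by
  rw [mem_ball_iff_norm, sub_zero, Complex.norm_real, Real.norm_eq_abs]
  have hc := hcpos hp0 hp
  have hr := rho_pos hp0 hp
  have h2 := rho_sq hp0 hp
  by_contra h; push_neg at h
  have hxx : (rho p)^2 ≤ x^2 := by
    nlinarith [mul_self_le_mul_self hr.le h, sq_abs x]
  nlinarith

lemma sR_pos {x : ℝ} (hx : 4*(p*(1-p))*x^2 < 1) : 0 < sR p x :=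
  Real.sqrt_pos.2 (by linarith)

lemma lpR_pos {x : ℝ} (hx : 4*(p*(1-p))*x^2 < 1) : 0 < lpR p x := by
  have := sR_pos hp0 hp hx; unfold lpR; linarith

lemma lp_real {x : ℝ} (hx : 4*(p*(1-p))*x^2 < 1) : lp p (x:ℂ) = ((lpR p x : ℝ) : ℂ) := by
  rw [lp, sf_real hp0 hp hx]; unfold lpR; push_cast; ring

lemma lm_real {x : ℝ} (hx : 4*(p*(1-p))*x^2 < 1) : lm p (x:ℂ) = ((lmR p x : ℝ) : ℂ) := by
  rw [lm, sf_real hp0 hp hx]; unfold lmR; push_cast; ring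

lemma Af_real {x : ℝ} (hx : 4*(p*(1-p))*x^2 < 1) : Af p (x:ℂ) = ((AfR p x : ℝ) : ℂ) := by
  rw [Af, sf_real hp0 hp hx, lm_real hp0 hp hx]; unfold AfR lmR; push_cast; ring

lemma Bf_real {x : ℝ} (hx : 4*(p*(1-p))*x^2 < 1) : Bf p (x:ℂ) = ((BfR p x : ℝ) : ℂ) := by
  rw [Bf, sf_real hp0 hp hx, lp_real hp0 hp hx]; unfold BfR lpR; push_cast; ring

lemma rf_real {x : ℝ} (hx : 4*(p*(1-p))*x^2 < 1) : rf p (x:ℂ) = ((rR p x : ℝ) : ℂ) := by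
  rw [rf, lp_real hp0 hp hx, lm_real hp0 hp hx]; unfold rR; push_cast; ring

lemma closed_form_real {x : ℝ} (hx : 4*(p*(1-p))*x^2 < 1) (n : ℕ) :
    RwrecR p x n = AfR p x * lpR p x ^ n + BfR p x * lmR p x ^ n := by
  have hw := mem_ball_of_real hp0 hp hx
  have h := closed_form hp0 hp hw n
  rw [RwrecC_ofReal, Af_real hp0 hp hx, Bf_real hp0 hp hx, lp_real hp0 hp hx,
      lm_real hp0 hp hx] at h
  exact_mod_cast h

end RealBridge

section Geometry
include hp0 hp

lemma del1_pos : 0 < del1 p := by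
  have := rho_gt_one hp0 hp
  unfold del1; apply lt_min <;> norm_num; linarith

lemma del1_le_half : del1 p ≤ 1/2 := min_le_left _ _

lemma del1_le : del1 p ≤ (rho p - 1)/2 := min_le_right _ _

lemma ball1_subset : ball (1:ℂ) (del1 p) ⊆ ball (0:ℂ) (rho p) := by
  intro w hw
  rw [mem_ball_iff_norm] at hw ⊢
  have h1 := del1_le hp0 hp
  have := norm_sub_norm_le w 1
  simp only [sub_zero]
  have hn1 : ‖(1:ℂ)‖ = 1 := by simp
  have := rho_gt_one hp0 hp
  calc ‖w‖ ≤ ‖w - 1‖ + ‖(1:ℂ)‖ := by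
        simpa using norm_add_le (w-1) 1
  _ < del1 p + 1 := by rw [hn1]; linarith
  _ ≤ (rho p - 1)/2 + 1 := by linarith
  _ < rho p := by linarith

lemma closedBall_rho'_subset : closedBall (0:ℂ) (rho' p) ⊆ ball (0:ℂ) (rho p) := by
  intro w hw
  rw [mem_closedBall_iff_norm] at hw
  rw [mem_ball_iff_norm]
  have := rho_gt_one hp0 hp
  simp only [sub_zero] at hw ⊢
  unfold rho' at hw; linarith

lemma sf_one : sf p 1 = ((1-2*p : ℝ) : ℂ) := by
  have hc4 := hc4 hp0 hp
  have hx : 4*(p*(1-p))*(1:ℝ)^2 < 1 := by nlinarith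
  have h := sf_real hp0 hp hx
  have : sR p 1 = 1 - 2*p := by
    unfold sR
    have : 1 - 4*(p*(1-p))*(1:ℝ)^2 = (1-2*p)^2 := by ring
    rw [this, Real.sqrt_sq (by linarith)]
  rw [this] at h
  exact_mod_cast h

lemma lp_one : lp p 1 = ((1-p : ℝ) : ℂ) := by
  rw [lp, sf_one hp0 hp]; push_cast; ring

lemma lm_one : lm p 1 = ((p : ℝ) : ℂ) := by
  rw [lm, sf_one hp0 hp]; push_cast; ring

lemma rf_one : rf p 1 = ((p/(1-p) : ℝ) : ℂ) := by
  rw [rf, lp_one hp0 hp, lm_one hp0 hp]; push_cast; ring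

lemma Bf_one : Bf p 1 = 1 := by
  rw [Bf, sf_one hp0 hp, lp_one hp0 hp]
  have h1 : ((1-2*p : ℝ) : ℂ) ≠ 0 := by
    rw [Complex.ofReal_ne_zero]; intro h; linarith
  push_cast at h1 ⊢
  field_simp
  have h1' : (1:ℂ) - (p:ℂ)*2 ≠ 0 := by rw [mul_comm]; exact h1
  field_simp
  ring

lemma Atil_one : Atil p 1 = ((-(1-p)/(1-2*p)^2 : ℝ) : ℂ) := by
  have h1 : ((1-2*p : ℝ) : ℂ) ≠ 0 := by
    rw [Complex.ofReal_ne_zero]; intro h; linarith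
  rw [Atil, sf_one hp0 hp]
  push_cast at h1 ⊢
  have hden : ((1:ℂ) - 2*(p:ℂ)) - 1 + 2*(1-(p:ℂ))*1 = 2*(1 - 2*(p:ℂ)) := by ring
  rw [hden]
  field_simp
lemma mem_ball1_ne_zero {w : ℂ} (hw : w ∈ ball (1:ℂ) (del1 p)) : w ≠ 0 := by
  intro h
  rw [h, mem_ball_iff_norm] at hw
  simp only [zero_sub, norm_neg] at hw
  have := del1_le_half hp0 hp
  have : ‖(1:ℂ)‖ = 1 := by simp
  rw [this] at hw; linarith

lemma mem_ball1_mem : ∀ w ∈ ball (1:ℂ) (del1 p), w ∈ ball (0:ℂ) (rho p) :=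
  fun w hw => ball1_subset hp0 hp hw

lemma den2_ne {w : ℂ} (hw : w ∈ ball (1:ℂ) (del1 p)) :
    sf p w - 1 + 2*(1-(p:ℂ))*w ≠ 0 := by
  intro h
  have hw' := ball1_subset hp0 hp hw
  have hs2 := sf_sq' hp0 hp hw'
  have hsf : sf p w = 1 - 2*(1-(p:ℂ))*w := by linear_combination h
  rw [hsf] at hs2
  have key : (1-(p:ℂ)) * (w * (1 - w)) = 0 := by linear_combination -hs2/4
  have hq : (1-(p:ℂ)) ≠ 0 := by
    have : ((1-p : ℝ) : ℂ) ≠ 0 := Complex.ofReal_ne_zero.2 (by linarith)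
    push_cast at this; exact this
  rcases mul_eq_zero.1 key with h1 | h1
  · exact hq h1
  rcases mul_eq_zero.1 h1 with h2 | h2
  · exact mem_ball1_ne_zero hp0 hp hw h2
  · have hw1 : w = 1 := by linear_combination -h2
    rw [hw1] at hsf
    rw [sf_one hp0 hp] at hsf
    have : ((1-2*p : ℝ) : ℂ) = ((2*p - 1 : ℝ) : ℂ) := by
      push_cast; push_cast at hsf; linear_combination hsf
    have h2p : (1-2*p : ℝ) = 2*p-1 := Complex.ofReal_inj.1 this
    linarith

lemma Atil_ne {w : ℂ} (hw : w ∈ ball (1:ℂ) (del1 p)) : Atil p w ≠ 0 := by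
  have hw' := ball1_subset hp0 hp hw
  have hnum : -2*(1-(p:ℂ))*w ≠ 0 := by
    apply mul_ne_zero
    apply mul_ne_zero
    · norm_num
    · have : ((1-p : ℝ) : ℂ) ≠ 0 := Complex.ofReal_ne_zero.2 (by linarith)
      push_cast at this; exact this
    · exact mem_ball1_ne_zero hp0 hp hw
  exact div_ne_zero hnum (mul_ne_zero (sf_ne hp0 hp hw') (den2_ne hp0 hp hw))

lemma Af_factor {w : ℂ} (hw : w ∈ ball (1:ℂ) (del1 p)) :
    Af p w = (w - 1) * Atil p w := by
  have hw' := ball1_subset hp0 hp hw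
  have hs2 := sf_sq' hp0 hp hw'
  have hsne := sf_ne hp0 hp hw'
  have hd2 := den2_ne hp0 hp hw
  rw [Af, Atil, lm]
  rw [div_eq_iff hsne, mul_div_assoc', div_mul_eq_mul_div, eq_div_iff (mul_ne_zero hsne hd2)]
  linear_combination (sf p w / 2) * hs2
lemma Af_zero_imp {w : ℂ} (hw : w ∈ ball (0:ℂ) (rho p)) (h : Af p w = 0) : w = 1 := by
  have hsne := sf_ne hp0 hp hw
  have hs2 := sf_sq' hp0 hp hw
  rw [Af, div_eq_zero_iff] at h
  rcases h with h | h
  swap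
  · exact absurd h hsne
  have hsf : sf p w = 2*(1-(p:ℂ))*w - 1 := by rw [lm] at h; linear_combination 2*h
  rw [hsf] at hs2
  have key : (1-(p:ℂ)) * (w * (w - 1)) = 0 := by linear_combination hs2/4
  have hq : (1-(p:ℂ)) ≠ 0 := by
    have : ((1-p : ℝ) : ℂ) ≠ 0 := Complex.ofReal_ne_zero.2 (by linarith)
    push_cast at this; exact this
  rcases mul_eq_zero.1 key with h1 | h1
  · exact absurd h1 hq
  rcases mul_eq_zero.1 h1 with h2 | h2
  · exfalso
    rw [h2] at hsf
    have hX0 : Xf p 0 = 1 := by unfold Xf; simp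
    have hsf0 : sf p (0:ℂ) = 1 := by rw [sf, hX0, Complex.one_cpow]
    rw [hsf0] at hsf
    norm_num at hsf
  · linear_combination h2

lemma x0_gt_one : 1 < x0 p := by
  have := del1_pos hp0 hp
  show 1 < 1 + del p/2
  have : 0 < del p := by show 0 < del1 p/8; linarith
  linarith

lemma x0_lt_rho : x0 p < rho p := by
  have h1 := del1_pos hp0 hp
  have h2 := del1_le hp0 hp
  show 1 + del p/2 < rho p
  show 1 + (del1 p/8)/2 < rho p
  linarith

lemma sq_bound {x : ℝ} (h0 : 0 < x) (h2 : x < rho p) : 4*(p*(1-p))*x^2 < 1 := by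
  have hc := hcpos hp0 hp
  have hrs := rho_sq hp0 hp
  have h3 : x^2 < (rho p)^2 := by nlinarith
  nlinarith

lemma x0_sq_lt : 4*(p*(1-p))*(x0 p)^2 < 1 :=
  sq_bound hp0 hp (by linarith [x0_gt_one hp0 hp]) (x0_lt_rho hp0 hp)

lemma AfR_x0_neg : AfR p (x0 p) < 0 := by
  have hx0lt := x0_sq_lt hp0 hp
  have hx0gt1 := x0_gt_one hp0 hp
  have hsR0 : 0 ≤ sR p (x0 p) := Real.sqrt_nonneg _
  have hsRsq : sR p (x0 p)^2 = 1 - 4*(p*(1-p))*(x0 p)^2 := Real.sq_sqrt (by linarith)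
  have h2q : 0 < 2*(1-p)*(x0 p) - 1 := by nlinarith
  have hsRlt : sR p (x0 p) < 2*(1-p)*(x0 p) - 1 := by
    nlinarith [sq_nonneg (sR p (x0 p) + (2*(1-p)*(x0 p) - 1))]
  have hsRpos : 0 < sR p (x0 p) := sR_pos hp0 hp hx0lt
  unfold AfR lmR
  apply div_neg_of_neg_of_pos _ hsRpos
  nlinarith

lemma sR_x0_lt_one : sR p (x0 p) < 1 := by
  have hx0lt := x0_sq_lt hp0 hp
  have hx0gt1 := x0_gt_one hp0 hp
  have hc := hcpos hp0 hp
  have hsR0 : 0 ≤ sR p (x0 p) := Real.sqrt_nonneg _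
  have hsRsq : sR p (x0 p)^2 = 1 - 4*(p*(1-p))*(x0 p)^2 := Real.sq_sqrt (by linarith)
  have hx0sq : 0 < (x0 p)^2 := pow_pos (by linarith) 2
  nlinarith [sq_nonneg (sR p (x0 p) - 1), mul_pos hc hx0sq]

lemma rR_x0_pos : 0 < rR p (x0 p) := by
  have h1 := sR_x0_lt_one hp0 hp
  have h2 := lpR_pos hp0 hp (x0_sq_lt hp0 hp)
  have h3 : 0 < lmR p (x0 p) := by unfold lmR; linarith
  exact div_pos h3 h2

lemma rR_x0_lt_one : rR p (x0 p) < 1 := by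
  have h2 := lpR_pos hp0 hp (x0_sq_lt hp0 hp)
  have h4 : 0 < sR p (x0 p) := sR_pos hp0 hp (x0_sq_lt hp0 hp)
  rw [rR, div_lt_one h2]
  unfold lmR lpR; linarith

end Geometry

section Analytic
include hp0 hp

lemma Xf_diff : Differentiable ℂ (Xf p) := by
  unfold Xf; fun_prop

lemma sf_diffOn : DifferentiableOn ℂ (sf p) (ball (0:ℂ) (rho p)) := by
  apply DifferentiableOn.cpow ((Xf_diff hp0 hp).differentiableOn) (differentiableOn_const _)
  intro x hx
  exact Or.inl (Xre_pos hp0 hp hx)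

lemma lp_diffOn : DifferentiableOn ℂ (lp p) (ball (0:ℂ) (rho p)) := by
  unfold lp
  exact ((differentiableOn_const _).add (sf_diffOn hp0 hp)).div_const _

lemma lm_diffOn : DifferentiableOn ℂ (lm p) (ball (0:ℂ) (rho p)) := by
  unfold lm
  exact ((differentiableOn_const _).sub (sf_diffOn hp0 hp)).div_const _

lemma Af_diffOn : DifferentiableOn ℂ (Af p) (ball (0:ℂ) (rho p)) := by
  unfold Af
  apply DifferentiableOn.div
  · apply DifferentiableOn.sub
    · apply DifferentiableOn.sub (differentiableOn_const _)
      fun_prop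
    · exact lm_diffOn hp0 hp
  · exact sf_diffOn hp0 hp
  · exact fun x hx => sf_ne hp0 hp hx

lemma Bf_diffOn : DifferentiableOn ℂ (Bf p) (ball (0:ℂ) (rho p)) := by
  unfold Bf
  apply DifferentiableOn.div
  · apply DifferentiableOn.sub (lp_diffOn hp0 hp)
    apply DifferentiableOn.sub (differentiableOn_const _)
    fun_prop
  · exact sf_diffOn hp0 hp
  · exact fun x hx => sf_ne hp0 hp hx

lemma rf_diffOn : DifferentiableOn ℂ (rf p) (ball (0:ℂ) (rho p)) := by
  unfold rf
  exact DifferentiableOn.div (lm_diffOn hp0 hp) (lp_diffOn hp0 hp)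
    (fun x hx => lp_ne hp0 hp hx)

lemma Atil_diffOn : DifferentiableOn ℂ (Atil p) (ball (1:ℂ) (del1 p)) := by
  unfold Atil
  apply DifferentiableOn.div
  · fun_prop
  · apply DifferentiableOn.mul ((sf_diffOn hp0 hp).mono (ball1_subset hp0 hp))
    apply DifferentiableOn.add
    · apply DifferentiableOn.sub ((sf_diffOn hp0 hp).mono (ball1_subset hp0 hp))
        (differentiableOn_const _)
    · fun_prop
  · intro x hx
    exact mul_ne_zero (sf_ne hp0 hp (ball1_subset hp0 hp hx)) (den2_ne hp0 hp hx)

lemma BA_diffOn : DifferentiableOn ℂ (fun w => Bf p w / Atil p w) (ball (1:ℂ) (del1 p)) :=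
  DifferentiableOn.div ((Bf_diffOn hp0 hp).mono (ball1_subset hp0 hp))
    (Atil_diffOn hp0 hp) (fun x hx => Atil_ne hp0 hp hx)

lemma gfun_diffOn (n : ℕ) :
    DifferentiableOn ℂ (fun w => Bf p w / Atil p w * rf p w ^ n) (ball (1:ℂ) (del1 p)) :=
  (BA_diffOn hp0 hp).mul (((rf_diffOn hp0 hp).mono (ball1_subset hp0 hp)).pow n)

end Analytic

section Main
include hp0 hp

set_option maxHeartbeats 2000000 in
theorem main :
    ∃ K : ℕ, ∃ zk : ℕ → ℝ,
      (∀ k : ℕ, K ≤ k → 0 < zk k ∧ 1 < zk k ∧ RwrecC p ((zk k : ℂ)) (k + 1) = 0 ∧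
          ∀ w : ℂ, RwrecC p w (k + 1) = 0 → zk k ≤ Complex.abs w) ∧
      Tendsto (fun k : ℕ => (zk k - 1) * ((1-p) / p) ^ k) atTop
        (nhds (p * (1 - 2 * p) ^ 2 / (1-p) ^ 2)) := by
  classical
  have hq1 : (0:ℝ) < 1 - p := by linarith
  have hρ := rho_gt_one hp0 hp
  have hδ1 : 0 < del1 p := del1_pos hp0 hp
  have hδ1h : del1 p ≤ 1/2 := del1_le_half hp0 hp
  have hδ1r : del1 p ≤ (rho p - 1)/2 := del1_le hp0 hp
  have hδdef : del p = del1 p / 8 := rfl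
  have hδ2def : del2 p = del1 p / 2 := rfl
  have hρ'def : rho' p = (1 + rho p)/2 := rfl
  have hρ'1 : 1 + del1 p ≤ rho' p := by rw [hρ'def]; linarith
  have hρ'ρ : rho' p < rho p := by rw [hρ'def]; linarith
  -- subset facts
  have hsub2 : closedBall (1:ℂ) (del2 p) ⊆ ball (1:ℂ) (del1 p) := by
    intro z hz
    rw [mem_closedBall] at hz
    rw [mem_ball]
    rw [hδ2def] at hz; linarith
  have hsub2' : closedBall (1:ℂ) (del2 p) ⊆ ball (0:ℂ) (rho p) :=
    fun z hz => ball1_subset hp0 hp (hsub2 hz)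
  have hsubρ' : closedBall (0:ℂ) (rho' p) ⊆ ball (0:ℂ) (rho p) := closedBall_rho'_subset hp0 hp
  -- compact sets and constants
  set Ks : Set ℂ := closedBall (0:ℂ) (rho' p) \ ball (1:ℂ) (del p) with hKs
  have hKcomp : IsCompact Ks := (isCompact_closedBall _ _).diff isOpen_ball
  have hKsub : Ks ⊆ ball (0:ℂ) (rho p) := fun w hw => hsubρ' hw.1
  have hρ'pos : (0:ℝ) < rho' p := by rw [hρ'def]; linarith
  have hKne : Ks.Nonempty := by
    refine ⟨((rho' p : ℝ) : ℂ), ?_, ?_⟩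
    · rw [mem_closedBall, Complex.dist_eq_abs]
      simp only [sub_zero, Complex.abs_ofReal]
      rw [abs_of_pos hρ'pos]
    · rw [mem_ball, Complex.dist_eq_abs]
      intro hcon
      have : Complex.abs ((rho' p : ℝ) - 1) = rho' p - 1 := by
        rw [← Complex.ofReal_one, ← Complex.ofReal_sub, Complex.abs_ofReal]
        rw [abs_of_pos (by linarith)]
      rw [this] at hcon
      rw [hδdef] at hcon
      linarith
  obtain ⟨wm, hwmK, hwm⟩ := hKcomp.exists_isMinOn hKne
    (Complex.continuous_abs.comp_continuousOn (((Af_diffOn hp0 hp).continuousOn).mono hKsub))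
  set m := Complex.abs (Af p wm) with hmdef
  have hmle : ∀ w ∈ Ks, m ≤ Complex.abs (Af p w) := fun w hw => hwm hw
  have hAfwm : Af p wm ≠ 0 := by
    intro h0
    have h1 := Af_zero_imp hp0 hp (hKsub hwmK) h0
    have hmem : (1:ℂ) ∈ ball (1:ℂ) (del p) := by
      rw [mem_ball, dist_self]; rw [hδdef]; linarith
    rw [h1] at hwmK
    exact hwmK.2 hmem
  have hm : 0 < m := Complex.abs.pos hAfwm
  obtain ⟨wb, hwbK, hwb⟩ := (isCompact_closedBall (0:ℂ) (rho' p)).exists_isMaxOn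
    ⟨0, by rw [mem_closedBall, dist_self]; linarith⟩
    (Complex.continuous_abs.comp_continuousOn (((Bf_diffOn hp0 hp).continuousOn).mono hsubρ'))
  set MB := Complex.abs (Bf p wb) with hMBdef
  have hMBle : ∀ w ∈ closedBall (0:ℂ) (rho' p), Complex.abs (Bf p w) ≤ MB := fun w hw => hwb hw
  obtain ⟨wr, hwrK, hwr⟩ := (isCompact_closedBall (0:ℂ) (rho' p)).exists_isMaxOn
    ⟨0, by rw [mem_closedBall, dist_self]; linarith⟩
    (Complex.continuous_abs.comp_continuousOn (((rf_diffOn hp0 hp).continuousOn).mono hsubρ'))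
  set θ0 := Complex.abs (rf p wr) with hθ0def
  have hθ0le : ∀ w ∈ closedBall (0:ℂ) (rho' p), Complex.abs (rf p w) ≤ θ0 := fun w hw => hwr hw
  have hθ0lt : θ0 < 1 := abs_rf_lt_one hp0 hp (hsubρ' hwrK)
  have hθ00 : 0 ≤ θ0 := Complex.abs.nonneg _
  have h1mem2 : (1:ℂ) ∈ closedBall (1:ℂ) (del2 p) := by
    rw [mem_closedBall, dist_self]; rw [hδ2def]; linarith
  obtain ⟨wa, hwaK, hwa⟩ := (isCompact_closedBall (1:ℂ) (del2 p)).exists_isMaxOn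
    ⟨1, h1mem2⟩
    (Complex.continuous_abs.comp_continuousOn (((BA_diffOn hp0 hp).continuousOn).mono hsub2))
  set M0 := Complex.abs (Bf p wa / Atil p wa) with hM0def
  have hM0le : ∀ w ∈ closedBall (1:ℂ) (del2 p), Complex.abs (Bf p w / Atil p w) ≤ M0 :=
    fun w hw => hwa hw
  have hM00 : 0 ≤ M0 := Complex.abs.nonneg _
  set M1 := M0 + 1 with hM1def
  have hM10 : 0 < M1 := by linarith
  obtain ⟨wt, hwtK, hwt⟩ := (isCompact_closedBall (1:ℂ) (del2 p)).exists_isMaxOn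
    ⟨1, h1mem2⟩
    (Complex.continuous_abs.comp_continuousOn (((rf_diffOn hp0 hp).continuousOn).mono hsub2'))
  set θ1 := Complex.abs (rf p wt) with hθ1def
  have hθ1le : ∀ w ∈ closedBall (1:ℂ) (del2 p), Complex.abs (rf p w) ≤ θ1 := fun w hw => hwt hw
  have hθ1lt : θ1 < 1 := abs_rf_lt_one hp0 hp (hsub2' hwtK)
  have hθ1pos : 0 < θ1 := by
    have h1 := hθ1le 1 h1mem2
    rw [rf_one hp0 hp] at h1
    rw [Complex.abs_ofReal] at h1
    have : 0 < p/(1-p) := by positivity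
    rw [abs_of_pos this] at h1
    linarith
  have hδ2le : del p ≤ del2 p := by rw [hδdef, hδ2def]; linarith
  have hsubδδ2 : closedBall (1:ℂ) (del p) ⊆ closedBall (1:ℂ) (del2 p) :=
    closedBall_subset_closedBall hδ2le
  have hx0def : x0 p = 1 + del p / 2 := rfl
  -- uniform bound on the fixed point map
  have hgball : ∀ n : ℕ, ∀ z ∈ closedBall (1:ℂ) (del2 p),
      Complex.abs (Bf p z / Atil p z * rf p z ^ n) ≤ M1 * θ1^n := by
    intro n z hz
    rw [map_mul, map_pow]
    have h1 := hM0le z hz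
    have h2 := hθ1le z hz
    have h3 : Complex.abs (rf p z) ^ n ≤ θ1^n :=
      pow_le_pow_left₀ (Complex.abs.nonneg _) h2 n
    calc Complex.abs (Bf p z / Atil p z) * Complex.abs (rf p z) ^ n ≤ M0 * θ1^n :=
          mul_le_mul h1 h3 (pow_nonneg (Complex.abs.nonneg _) n) hM00
    _ ≤ M1 * θ1^n := by
        apply mul_le_mul_of_nonneg_right _ (pow_nonneg hθ1pos.le n)
        rw [hM1def]; linarith
  -- Lipschitz estimate via the Schwarz lemma
  have hLip : ∀ n : ℕ, ∀ w₁ ∈ closedBall (1:ℂ) (del p), ∀ w₂ ∈ closedBall (1:ℂ) (del p),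
      dist (Bf p w₁ / Atil p w₁ * rf p w₁ ^ n) (Bf p w₂ / Atil p w₂ * rf p w₂ ^ n) ≤
        (8 * (M1 * θ1^n) / del1 p) * dist w₁ w₂ := by
    intro n w₁ hw₁ w₂ hw₂
    set g : ℂ → ℂ := fun z => Bf p z / Atil p z * rf p z ^ n with hg
    have hballsub : ball w₂ (3*del1 p/8) ⊆ closedBall (1:ℂ) (del2 p) := by
      intro z hz
      rw [mem_ball] at hz; rw [mem_closedBall]
      have h2 : dist w₂ 1 ≤ del p := mem_closedBall.1 hw₂
      rw [hδdef] at h2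
      calc dist z 1 ≤ dist z w₂ + dist w₂ 1 := dist_triangle _ _ _
      _ ≤ 3*del1 p/8 + del1 p/8 := by linarith
      _ ≤ del2 p := by rw [hδ2def]; linarith
    have hballsub2 : ball w₂ (3*del1 p/8) ⊆ ball (1:ℂ) (del1 p) :=
      fun z hz => hsub2 (hballsub hz)
    have hdiff : DifferentiableOn ℂ g (ball w₂ (3*del1 p/8)) :=
      (gfun_diffOn hp0 hp n).mono hballsub2
    have hmaps : Set.MapsTo g (ball w₂ (3*del1 p/8)) (ball (g w₂) (3*(M1*θ1^n))) := by
      intro z hz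
      rw [mem_ball]
      have hz2 := hballsub hz
      have hw22 : w₂ ∈ closedBall (1:ℂ) (del2 p) := hsubδδ2 hw₂
      have hb1 := hgball n z hz2
      have hb2 := hgball n w₂ hw22
      have hpos : 0 < M1*θ1^n := by positivity
      calc dist (g z) (g w₂) ≤ ‖g z‖ + ‖g w₂‖ := by
            rw [dist_eq_norm]; exact norm_sub_le _ _
      _ ≤ M1*θ1^n + M1*θ1^n := by
          rw [Complex.norm_eq_abs, Complex.norm_eq_abs]; exact add_le_add hb1 hb2
      _ < 3*(M1*θ1^n) := by linarith
    have hw₁mem : w₁ ∈ ball w₂ (3*del1 p/8) := by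
      rw [mem_ball]
      have h1 := mem_closedBall.1 hw₁
      have h2 := mem_closedBall.1 hw₂
      rw [hδdef] at h1 h2
      calc dist w₁ w₂ ≤ dist w₁ 1 + dist 1 w₂ := dist_triangle _ _ _
      _ = dist w₁ 1 + dist w₂ 1 := by rw [dist_comm 1 w₂]
      _ ≤ del1 p/8 + del1 p/8 := add_le_add h1 h2
      _ < 3*del1 p/8 := by linarith
    have hsch := Complex.dist_le_div_mul_dist_of_mapsTo_ball hdiff (hmaps.mono_right ball_subset_closedBall) hw₁mem
    calc dist (g w₁) (g w₂) ≤ 3*(M1*θ1^n) / (3*del1 p/8) * dist w₁ w₂ := hsch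
    _ = (8*(M1*θ1^n)/del1 p) * dist w₁ w₂ := by
        rw [div_div_eq_mul_div]
        congr 1
        field_simp
  -- the fixed point equation for zeros near 1
  have hformula : ∀ n : ℕ, ∀ w ∈ closedBall (1:ℂ) (del p), RwrecC p w n = 0 →
      w - 1 = -(Bf p w / Atil p w * rf p w ^ n) := by
    intro n w hw hzero
    have hw1 : w ∈ ball (1:ℂ) (del1 p) := by
      rw [mem_ball]
      have := mem_closedBall.1 hw
      rw [hδdef] at this; linarith
    have hw0 : w ∈ ball (0:ℂ) (rho p) := ball1_subset hp0 hp hw1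
    have hcf := closed_form hp0 hp hw0 n
    rw [hzero] at hcf
    have hAf := Af_factor hp0 hp hw1
    have hlpne := lp_ne hp0 hp hw0
    have hlmrf : lm p w = rf p w * lp p w := by rw [rf]; field_simp
    have hlpn : lp p w ^ n ≠ 0 := pow_ne_zero _ hlpne
    have hAt := Atil_ne hp0 hp hw1
    have key : ((w-1) * Atil p w + Bf p w * rf p w ^ n) * lp p w ^ n = 0 := by
      calc ((w-1) * Atil p w + Bf p w * rf p w ^ n) * lp p w ^ n
          = Af p w * lp p w ^ n + Bf p w * (rf p w * lp p w) ^ n := by rw [hAf]; ring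
      _ = Af p w * lp p w ^ n + Bf p w * lm p w ^ n := by rw [← hlmrf]
      _ = 0 := hcf.symm
    have key2 : (w-1) * Atil p w + Bf p w * rf p w ^ n = 0 := by
      rcases mul_eq_zero.1 key with h | h
      · exact h
      · exact absurd h hlpn
    rw [div_mul_eq_mul_div, ← neg_div, eq_div_iff hAt]
    linear_combination key2
  -- sign facts at x0
  have hc := hcpos hp0 hp
  have hrs := rho_sq hp0 hp
  have hδpos : 0 < del p := by rw [hδdef]; linarith
  have hx0gt1 : 1 < x0 p := x0_gt_one hp0 hp
  have hx0lt : 4*(p*(1-p))*(x0 p)^2 < 1 := x0_sq_lt hp0 hp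
  have hAfRneg : AfR p (x0 p) < 0 := AfR_x0_neg hp0 hp
  have hlpRpos := lpR_pos hp0 hp hx0lt
  have hrRpos : 0 < rR p (x0 p) := rR_x0_pos hp0 hp
  have hrRlt1 : rR p (x0 p) < 1 := rR_x0_lt_one hp0 hp
  -- eventual smallness facts
  have hE1 : ∀ᶠ n in atTop, MB * θ0^n < m := by
    apply evlt _ _ hm
    have := (tendsto_pow_atTop_nhds_zero_of_lt_one hθ00 hθ0lt).const_mul MB
    simpa using this
  have hE2 : ∀ᶠ n in atTop, 8*(M1*θ1^n)/del1 p < 1 := by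
    apply evlt _ _ one_pos
    have := (tendsto_pow_atTop_nhds_zero_of_lt_one hθ1pos.le hθ1lt).const_mul (8*M1/del1 p)
    rw [mul_zero] at this
    convert this using 2 with n
    field_simp
  have hE3 : ∀ᶠ n in atTop, AfR p (x0 p) + BfR p (x0 p) * rR p (x0 p)^n < 0 := by
    have ht : Tendsto (fun n : ℕ => AfR p (x0 p) + BfR p (x0 p) * rR p (x0 p)^n) atTop
        (nhds (AfR p (x0 p) + BfR p (x0 p) * 0)) :=
      tendsto_const_nhds.add ((tendsto_pow_atTop_nhds_zero_of_lt_one hrRpos.le hrRlt1).const_mul _)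
    exact ht.eventually (eventually_lt_nhds (by rw [mul_zero, add_zero]; exact hAfRneg))
  -- the main eventual construction
  have key : ∀ᶠ n in atTop, ∃ x : ℝ, 1 < x ∧ x < x0 p ∧ RwrecC p (x:ℂ) n = 0 ∧
      (∀ w : ℂ, RwrecC p w n = 0 → x ≤ Complex.abs w) ∧
      Complex.abs ((x:ℂ) - 1) ≤ M1*θ1^n ∧
      ((x:ℂ) - 1 = -(Bf p (x:ℂ) / Atil p (x:ℂ) * rf p (x:ℂ) ^ n)) := by
    filter_upwards [hE1, hE2, hE3] with n hE1 hE2 hE3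
    have hcont : ContinuousOn (fun x => RwrecR p x n) (Icc 1 (x0 p)) :=
      (RwrecR_cont p n).continuousOn
    have hf1 : 0 < RwrecR p 1 n := by rw [RwrecR_one]; positivity
    have hfx0 : RwrecR p (x0 p) n < 0 := by
      rw [closed_form_real hp0 hp hx0lt n]
      have hlmrfR : lmR p (x0 p) = rR p (x0 p) * lpR p (x0 p) := by
        rw [rR]; field_simp
      rw [hlmrfR, mul_pow]
      have hlpn : 0 < lpR p (x0 p)^n := pow_pos hlpRpos n
      calc AfR p (x0 p) * lpR p (x0 p)^n + BfR p (x0 p)*(rR p (x0 p)^n * lpR p (x0 p)^n)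
          = (AfR p (x0 p) + BfR p (x0 p)*rR p (x0 p)^n)*lpR p (x0 p)^n := by ring
      _ < 0 := mul_neg_of_neg_of_pos hE3 hlpn
    obtain ⟨x, hxIoo, hfx0'⟩ := (intermediate_value_Ioo' (le_of_lt hx0gt1) hcont) ⟨hfx0, hf1⟩
    have hfx : RwrecR p x n = 0 := hfx0'
    have hx1 : 1 < x := hxIoo.1
    have hxx0 : x < x0 p := hxIoo.2
    have hxlt : 4*(p*(1-p))*x^2 < 1 :=
      sq_bound hp0 hp (by linarith) (by linarith [x0_lt_rho hp0 hp])
    have hzeroC : RwrecC p (x:ℂ) n = 0 := by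
      rw [RwrecC_ofReal, hfx]; simp
    have hxball : (x:ℂ) ∈ closedBall (1:ℂ) (del p) := by
      rw [mem_closedBall, Complex.dist_eq_abs]
      have he : ((x:ℂ) - 1) = ((x - 1 : ℝ):ℂ) := by push_cast; ring
      rw [he, Complex.abs_ofReal, abs_of_pos (by linarith)]
      rw [hx0def] at hxx0
      linarith
    have hform := hformula n _ hxball hzeroC
    have habs1 : Complex.abs ((x:ℂ)-1) ≤ M1*θ1^n := by
      rw [hform, Complex.abs.map_neg]
      exact hgball n _ (hsubδδ2 hxball)
    refine ⟨x, hx1, hxx0, hzeroC, ?_, habs1, hform⟩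
    intro w hw
    by_cases hwb : w ∈ closedBall (1:ℂ) (del p)
    · have hformw := hformula n w hwb hw
      have hdist := hLip n w hwb (x:ℂ) hxball
      have heqd : dist w (x:ℂ) =
          dist (Bf p w / Atil p w * rf p w ^ n) (Bf p (x:ℂ) / Atil p (x:ℂ) * rf p (x:ℂ) ^ n) := by
        rw [Complex.dist_eq_abs, Complex.dist_eq_abs]
        have h9 : w - (x:ℂ) = (Bf p (x:ℂ)/Atil p (x:ℂ)*rf p (x:ℂ)^n) -
            (Bf p w/Atil p w*rf p w^n) := by
          linear_combination hformw - hform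
        rw [h9]
        exact Complex.abs.map_sub _ _
      have hd := heqd ▸ hdist
      have hd0 : dist w (x:ℂ) = 0 := by
        by_contra hne
        have hdp : 0 < dist w (x:ℂ) :=
          lt_of_le_of_ne dist_nonneg (Ne.symm hne)
        have hlt := mul_lt_mul_of_pos_right hE2 hdp
        rw [one_mul] at hlt
        linarith
      have hwx : w = (x:ℂ) := by rwa [dist_eq_zero] at hd0
      rw [hwx, Complex.abs_ofReal, abs_of_pos (by linarith)]
    · by_cases hwρ : Complex.abs w ≤ rho' p
      · exfalso
        have hwK : w ∈ Ks := by
          refine ⟨?_, fun hmem => hwb (ball_subset_closedBall hmem)⟩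
          rw [mem_closedBall, Complex.dist_eq_abs, sub_zero]
          exact hwρ
        have hw0 : w ∈ ball (0:ℂ) (rho p) := hKsub hwK
        have hwcb : w ∈ closedBall (0:ℂ) (rho' p) := hwK.1
        have hcf := closed_form hp0 hp hw0 n
        rw [hw] at hcf
        have hlpne := lp_ne hp0 hp hw0
        have hlmrf : lm p w = rf p w * lp p w := by rw [rf]; field_simp
        have heq : Af p w * lp p w^n = -(Bf p w * lm p w^n) := by linear_combination -hcf
        have habs : Complex.abs (Af p w) * Complex.abs (lp p w)^n =
            Complex.abs (Bf p w) * Complex.abs (lm p w)^n := by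
          have h10 := congrArg Complex.abs heq
          rwa [map_mul, map_pow, Complex.abs.map_neg, map_mul, map_pow] at h10
        set L := Complex.abs (lp p w) with hLdef
        have hL : 0 < L := Complex.abs.pos hlpne
        have h1 : m * L^n ≤ Complex.abs (Af p w) * L^n :=
          mul_le_mul_of_nonneg_right (hmle w hwK) (pow_nonneg hL.le n)
        have h2 : Complex.abs (lm p w) ≤ θ0 * L := by
          rw [hlmrf, map_mul]
          exact mul_le_mul_of_nonneg_right (hθ0le w hwcb) hL.le
        have h3 : Complex.abs (Bf p w)*Complex.abs (lm p w)^n ≤ MB*(θ0*L)^n :=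
          mul_le_mul (hMBle w hwcb) (pow_le_pow_left₀ (Complex.abs.nonneg _) h2 n)
            (pow_nonneg (Complex.abs.nonneg _) n) (Complex.abs.nonneg _)
        have h4 : MB*(θ0*L)^n = MB*θ0^n*L^n := by rw [mul_pow]; ring
        have h5 : MB*θ0^n*L^n < m*L^n :=
          mul_lt_mul_of_pos_right hE1 (pow_pos hL n)
        have h6 := h1.trans_eq habs
        rw [h4] at h3
        linarith
      · push_neg at hwρ
        have hx0ρ' : x0 p ≤ rho' p := by
          rw [hx0def, hδdef]
          linarith
        linarith
  -- extract threshold and define the root sequence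
  obtain ⟨N, hN⟩ := eventually_atTop.mp key
  set zk : ℕ → ℝ := fun k =>
    if h : ∃ x : ℝ, 1 < x ∧ x < x0 p ∧ RwrecC p (x:ℂ) (k+1) = 0 ∧
      (∀ w : ℂ, RwrecC p w (k+1) = 0 → x ≤ Complex.abs w) ∧
      Complex.abs ((x:ℂ) - 1) ≤ M1*θ1^(k+1) ∧
      ((x:ℂ) - 1 = -(Bf p (x:ℂ) / Atil p (x:ℂ) * rf p (x:ℂ) ^ (k+1)))
    then h.choose else 2 with hzkdef
  have hzk : ∀ k : ℕ, N ≤ k → (1 < zk k ∧ zk k < x0 p ∧ RwrecC p ((zk k : ℝ):ℂ) (k+1) = 0 ∧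
      (∀ w : ℂ, RwrecC p w (k+1) = 0 → zk k ≤ Complex.abs w) ∧
      Complex.abs (((zk k : ℝ):ℂ) - 1) ≤ M1*θ1^(k+1) ∧
      (((zk k : ℝ):ℂ) - 1 =
        -(Bf p ((zk k : ℝ):ℂ) / Atil p ((zk k : ℝ):ℂ) * rf p ((zk k : ℝ):ℂ) ^ (k+1)))) := by
    intro k hk
    have h := hN (k+1) (le_trans hk (Nat.le_succ k))
    simp only [hzkdef]
    rw [dif_pos h]
    exact h.choose_spec
  refine ⟨N, zk, ?_, ?_⟩
  · intro k hk
    obtain ⟨h1, h2, h3, h4, h5, h6⟩ := hzk k hk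
    exact ⟨by linarith, h1, h3, h4⟩
  -- the limit
  set QC : ℂ := (((1-p)/p : ℝ) : ℂ) with hQC
  have hQCne : QC ≠ 0 := by
    rw [hQC, Complex.ofReal_ne_zero]
    exact div_ne_zero (by linarith) (by linarith)
  have hgeo : Tendsto (fun k : ℕ => M1*θ1^(k+1)) atTop (nhds 0) := by
    have h := ((tendsto_pow_atTop_nhds_zero_of_lt_one hθ1pos.le hθ1lt).const_mul M1).comp
      (tendsto_add_atTop_nat 1)
    rw [mul_zero] at h
    exact h
  have hz1ev : ∀ᶠ k in atTop, Complex.abs (((zk k : ℝ):ℂ) - 1) ≤ M1*θ1^(k+1) :=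
    eventually_atTop.2 ⟨N, fun k hk => (hzk k hk).2.2.2.2.1⟩
  have hzt : Tendsto (fun k => ((zk k : ℝ):ℂ)) atTop (nhds 1) := by
    rw [tendsto_iff_norm_sub_tendsto_zero]
    apply squeeze_zero' (Eventually.of_forall fun k => Complex.abs.nonneg _) _ hgeo
    filter_upwards [hz1ev] with k hk
    exact hk
  have h1ball : (1:ℂ) ∈ ball (1:ℂ) (del1 p) := by rw [mem_ball, dist_self]; exact hδ1
  have hBA_cont : ContinuousAt (fun w : ℂ => Bf p w / Atil p w) 1 :=
    (BA_diffOn hp0 hp).continuousOn.continuousAt (isOpen_ball.mem_nhds h1ball)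
  have hT1 : Tendsto (fun k => Bf p ((zk k : ℝ):ℂ) / Atil p ((zk k : ℝ):ℂ)) atTop
      (nhds (Bf p 1 / Atil p 1)) := hBA_cont.tendsto.comp hzt
  have hrf1 : rf p 1 = ((p/(1-p):ℝ):ℂ) := rf_one hp0 hp
  have hQCrf : QC * rf p 1 = 1 := by
    rw [hrf1, hQC]
    push_cast
    have hpne : (p:ℂ) ≠ 0 := Complex.ofReal_ne_zero.2 (by linarith)
    have h1pne : (1:ℂ) - (p:ℂ) ≠ 0 := by
      have : ((1-p : ℝ):ℂ) ≠ 0 := Complex.ofReal_ne_zero.2 (by linarith)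
      push_cast at this; exact this
    field_simp
  have h1ρ : (1:ℂ) ∈ ball (0:ℂ) (rho p) := by
    rw [mem_ball, Complex.dist_eq_abs, sub_zero]
    simpa using hρ
  have hrflip : ∀ z ∈ ball (1:ℂ) (del2 p), dist (rf p z) (rf p 1) ≤ (3/del2 p) * dist z 1 := by
    intro z hz
    have hδ2pos : 0 < del2 p := by rw [hδ2def]; linarith
    apply Complex.dist_le_div_mul_dist_of_mapsTo_ball
      ((rf_diffOn hp0 hp).mono
        (fun y hy => ball1_subset hp0 hp (ball_subset_ball (by rw [hδ2def]; linarith) hy)))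
      ?_ hz
    intro y hy
    rw [mem_closedBall]; apply le_of_lt
    have hy' : y ∈ ball (0:ℂ) (rho p) :=
      ball1_subset hp0 hp (ball_subset_ball (by rw [hδ2def]; linarith) hy)
    have h1 := abs_rf_lt_one hp0 hp hy'
    have h2 := abs_rf_lt_one hp0 hp h1ρ
    calc dist (rf p y) (rf p 1) ≤ Complex.abs (rf p y) + Complex.abs (rf p 1) := by
          rw [Complex.dist_eq_abs]
          exact (Complex.abs.sub_le_add _ _)
    _ < 3 := by linarith
  have hδ2pos : 0 < del2 p := by rw [hδ2def]; linarith
  have hU : ∀ᶠ k in atTop, Complex.abs (rf p ((zk k : ℝ):ℂ) * QC - 1) ≤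
      ((1-p)/p)*(3/del2 p)*(M1*θ1^(k+1)) := by
    apply eventually_atTop.2 ⟨N, fun k hk => ?_⟩
    obtain ⟨h1, h2, h3, h4, h5, h6⟩ := hzk k hk
    have habs1 : Complex.abs (((zk k : ℝ):ℂ) - 1) = zk k - 1 := by
      have he : ((zk k : ℝ):ℂ) - 1 = ((zk k - 1 : ℝ):ℂ) := by push_cast; ring
      rw [he, Complex.abs_ofReal, abs_of_pos (by linarith)]
    have hmem : ((zk k : ℝ):ℂ) ∈ ball (1:ℂ) (del2 p) := by
      rw [mem_ball, Complex.dist_eq_abs, habs1]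
      rw [hx0def] at h2
      rw [hδ2def]
      rw [hδdef] at h2
      linarith
    have hsplit : rf p ((zk k : ℝ):ℂ) * QC - 1 = QC * (rf p ((zk k : ℝ):ℂ) - rf p 1) := by
      linear_combination hQCrf
    rw [hsplit, map_mul]
    have hQCabs : Complex.abs QC = (1-p)/p := by
      rw [hQC, Complex.abs_ofReal, abs_of_pos (by positivity)]
    rw [hQCabs]
    have hlip := hrflip _ hmem
    rw [Complex.dist_eq_abs, Complex.dist_eq_abs, habs1] at hlip
    have hb2 : Complex.abs (rf p ((zk k : ℝ):ℂ) - rf p 1) ≤ (3/del2 p)*(M1*θ1^(k+1)) := by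
      calc Complex.abs (rf p ((zk k : ℝ):ℂ) - rf p 1) ≤ (3/del2 p) * (zk k - 1) := hlip
      _ ≤ (3/del2 p)*(M1*θ1^(k+1)) := by
          apply mul_le_mul_of_nonneg_left _ (by positivity)
          rw [← habs1]; exact h5
    calc (1-p)/p * Complex.abs (rf p ((zk k : ℝ):ℂ) - rf p 1) ≤
        (1-p)/p * ((3/del2 p)*(M1*θ1^(k+1))) := by
          apply mul_le_mul_of_nonneg_left hb2 (by positivity)
    _ = ((1-p)/p)*(3/del2 p)*(M1*θ1^(k+1)) := by ring
  have hpow1 : Tendsto (fun k : ℕ => (rf p ((zk k : ℝ):ℂ) * QC)^(k+1)) atTop (nhds 1) := by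
    apply pow_tendsto_one
    apply squeeze_zero' (Eventually.of_forall fun k => by positivity) _
      (by simpa using (geo_aux (((1-p)/p)*(3/del2 p)*M1) θ1 hθ1pos.le hθ1lt))
    · filter_upwards [hU] with k hk
      calc (k+1 : ℝ) * Complex.abs (rf p ((zk k : ℝ):ℂ) * QC - 1) ≤
          (k+1 : ℝ) * (((1-p)/p)*(3/del2 p)*(M1*θ1^(k+1))) := by
            apply mul_le_mul_of_nonneg_left hk (by positivity)
      _ = (k+1 : ℝ) * ((((1-p)/p)*(3/del2 p)*M1)*θ1^(k+1)) := by ring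
  set LC : ℂ := -(Bf p 1 / Atil p 1) * 1 * QC⁻¹ with hLCdef
  have hFt : Tendsto (fun k : ℕ => -(Bf p ((zk k : ℝ):ℂ) / Atil p ((zk k : ℝ):ℂ)) *
      (rf p ((zk k : ℝ):ℂ) * QC)^(k+1) * QC⁻¹) atTop (nhds LC) :=
    (hT1.neg.mul hpow1).mul tendsto_const_nhds
  have hFeq : ∀ᶠ k in atTop, (((zk k - 1)*((1-p)/p)^k : ℝ) : ℂ) =
      -(Bf p ((zk k : ℝ):ℂ) / Atil p ((zk k : ℝ):ℂ)) *
      (rf p ((zk k : ℝ):ℂ) * QC)^(k+1) * QC⁻¹ := by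
    apply eventually_atTop.2 ⟨N, fun k hk => ?_⟩
    obtain ⟨h1, h2, h3, h4, h5, h6⟩ := hzk k hk
    have hcast : (((zk k - 1)*((1-p)/p)^k : ℝ) : ℂ) = (((zk k : ℝ):ℂ) - 1) * QC^k := by
      rw [hQC]; push_cast; ring
    have hQCp : QC^(k+1) * QC⁻¹ = QC^k := by
      rw [pow_succ]
      field_simp
    rw [hcast, h6, mul_pow]
    linear_combination (Bf p ((zk k : ℝ):ℂ) / Atil p ((zk k : ℝ):ℂ) *
      rf p ((zk k : ℝ):ℂ)^(k+1)) * hQCp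
  have hA1ne : ((-(1-p)/(1-2*p)^2 : ℝ):ℂ) ≠ 0 := by
    apply Complex.ofReal_ne_zero.2
    have hneg : (-(1-p)/(1-2*p)^2 : ℝ) < 0 :=
      div_neg_of_neg_of_pos (by linarith) (pow_pos (by linarith) 2)
    exact ne_of_lt hneg
  have hBA1 : Bf p 1 / Atil p 1 = ((-(1-2*p)^2/(1-p) : ℝ):ℂ) := by
    rw [Bf_one hp0 hp, Atil_one hp0 hp, div_eq_iff hA1ne, ← Complex.ofReal_mul]
    rw [show (1:ℂ) = ((1:ℝ):ℂ) by norm_num]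
    apply congrArg
    have h2p' : (1-2*p:ℝ) ≠ 0 := by linarith
    have h1p' : (1-p:ℝ) ≠ 0 := by linarith
    field_simp
  have hLC : LC = ((p*(1-2*p)^2/(1-p)^2 : ℝ):ℂ) := by
    rw [hLCdef, hBA1, hQC]
    have hreal2 : (-(-(1-2*p)^2/(1-p)) * 1 * ((1-p)/p)⁻¹ : ℝ) = p*(1-2*p)^2/(1-p)^2 := by
      have h1p' : (1-p:ℝ) ≠ 0 := by linarith
      have hp' : (p:ℝ) ≠ 0 := by linarith
      field_simp
    rw [← hreal2]
    push_cast
    ring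
  have hcfin : Tendsto (fun k : ℕ => (((zk k - 1)*((1-p)/p)^k : ℝ) : ℂ)) atTop
      (nhds (((p*(1-2*p)^2/(1-p)^2 : ℝ):ℂ))) := by
    rw [← hLC]
    exact hFt.congr' (hFeq.mono fun k hk => hk.symm)
  have hre := (Complex.continuous_re.tendsto _).comp hcfin
  simp only [Function.comp_def, Complex.ofReal_re] at hre
  exact hre

end Main


end WDZ
end

open Filter

/-- For all sufficiently large `k`, `R_k` has a zero `z_k` that is real, positive,
greater than `1`, and of smallest modulus among all complex zeros of `R_k`, and
`(z_k - 1)(q/p)^k → p(1-2p)²/q²` as `k → ∞`. -/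
theorem weak_dominant_zero (p q : ℝ) (hp0 : 0 < p) (hp : p < 1 / 2) (hq : q = 1 - p) :
    ∃ K : ℕ, ∃ zk : ℕ → ℝ,
      (∀ k : ℕ, K ≤ k →
        0 < zk k ∧ 1 < zk k ∧ RwrecC p ((zk k : ℂ)) (k + 1) = 0 ∧
          ∀ w : ℂ, RwrecC p w (k + 1) = 0 → zk k ≤ ‖w‖) ∧
      Tendsto (fun k : ℕ => (zk k - 1) * (q / p) ^ k) atTop
        (nhds (p * (1 - 2 * p) ^ 2 / q ^ 2)) := by
  subst hq
  exact WDZ.main hp0 hp
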